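/- For the distribution F(v) = 1 − e^{−v/e} on [0,e) with atom 1/e at e, and a fixed price p ∈ [0, e]: the seller's expected revenue is p·e^{−p/e}, the buyer's expected utility is e^{1−p/e} − 1, and the gains-from-trade is p·e^{−p/e} + e^{1−p/e} − 1. -/

import Mathlib

open MeasureTheory
open scoped ENNReal NNReal

lemma gmeas : Measurable (fun v : ℝ => Real.exp (-v / Real.exp 1) / Real.exp 1) :=
  (Real.measurable_exp.comp ((measurable_id.neg).div_const _)).div_const _

lemma gnonneg (v : ℝ) : 0 ≤ Real.exp (-v / Real.exp 1) / Real.exp 1 :=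
  div_nonneg (Real.exp_nonneg _) (Real.exp_nonneg _)

lemma deriv_aux (A B E : ℝ) (hE : E ≠ 0) (v : ℝ) :
    HasDerivAt (fun v => -(A + B * (v + E)) * Real.exp (-v / E))
      ((A + B * v) * Real.exp (-v / E) / E) v := by
  have h1 : HasDerivAt (fun v : ℝ => -(A + B * (v + E))) (-B) v := by
    have := ((hasDerivAt_id v).add_const E).const_mul B
    have h := (this.const_add A).neg
    simp only [mul_one] at h
    exact h
  have h2 : HasDerivAt (fun v : ℝ => Real.exp (-v / E)) (Real.exp (-v / E) * (-1 / E)) v := by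
    have : HasDerivAt (fun v : ℝ => -v / E) (-1 / E) v := by
      simpa using ((hasDerivAt_id v).neg.div_const E)
    exact (Real.hasDerivAt_exp _).comp v this
  have := h1.mul h2
  refine this.congr_deriv ?_
  field_simp
  ring

lemma integral_mu (f : ℝ → ℝ) (hf : Measurable f)
    (hint : IntegrableOn (fun v => f v * (Real.exp (-v / Real.exp 1) / Real.exp 1))
      (Set.Ico 0 (Real.exp 1))) :
    (∫ v, f v ∂((volume.restrict (Set.Ico 0 (Real.exp 1))).withDensity
            (fun v => ENNReal.ofReal (Real.exp (-v / Real.exp 1) / Real.exp 1))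
          + ENNReal.ofReal (1 / Real.exp 1) • Measure.dirac (Real.exp 1)))
      = (∫ v in Set.Ico 0 (Real.exp 1), f v * (Real.exp (-v / Real.exp 1) / Real.exp 1))
        + (1 / Real.exp 1) * f (Real.exp 1) := by
  have hd : Integrable f (Measure.dirac (Real.exp 1)) := by
    refine ⟨hf.aestronglyMeasurable, ?_⟩
    rw [HasFiniteIntegral, lintegral_dirac' _ hf.enorm]
    exact enorm_lt_top
  have hfin : ∀ᵐ x ∂(volume.restrict (Set.Ico 0 (Real.exp 1))),
      ENNReal.ofReal (Real.exp (-x / Real.exp 1) / Real.exp 1) < ⊤ := by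
    filter_upwards with x using ENNReal.ofReal_lt_top
  have heq : (fun x => f x * (ENNReal.ofReal (Real.exp (-x / Real.exp 1) / Real.exp 1)).toReal)
      = fun v => f v * (Real.exp (-v / Real.exp 1) / Real.exp 1) := by
    funext x; rw [ENNReal.toReal_ofReal (gnonneg x)]
  have hw : Integrable f ((volume.restrict (Set.Ico 0 (Real.exp 1))).withDensity
      (fun v => ENNReal.ofReal (Real.exp (-v / Real.exp 1) / Real.exp 1))) := by
    rw [integrable_withDensity_iff (gmeas.ennreal_ofReal) hfin, heq]
    exact hint
  rw [integral_add_measure hw (hd.smul_measure ENNReal.ofReal_ne_top),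
    integral_smul_measure, integral_dirac]
  congr 1
  · -- withDensity integral
    have : (fun v : ℝ => ENNReal.ofReal (Real.exp (-v / Real.exp 1) / Real.exp 1))
        = fun v => ((Real.exp (-v / Real.exp 1) / Real.exp 1).toNNReal : ℝ≥0∞) := by
      funext v; rfl
    rw [this, integral_withDensity_eq_integral_smul
      (by exact gmeas.real_toNNReal) f]
    rw [← heq]
    congr 1; funext x
    rw [NNReal.smul_def, smul_eq_mul]
    rw [Real.coe_toNNReal _ (gnonneg x), ENNReal.toReal_ofReal (gnonneg x)]
    ring
  · rw [ENNReal.toReal_ofReal (by positivity), smul_eq_mul]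

lemma integral_Ico_lin (A B p : ℝ) (hpe : p ≤ Real.exp 1) :
    ∫ v in Set.Ico p (Real.exp 1), (A + B * v) * (Real.exp (-v / Real.exp 1) / Real.exp 1)
      = (A + B * (p + Real.exp 1)) * Real.exp (-p / Real.exp 1)
        - (A + B * (Real.exp 1 + Real.exp 1)) * Real.exp (-1) := by
  have hE : Real.exp 1 ≠ 0 := Real.exp_ne_zero 1
  rw [setIntegral_congr_set Ico_ae_eq_Ioc, ← intervalIntegral.integral_of_le hpe]
  have hd : ∀ v ∈ Set.uIcc p (Real.exp 1),
      HasDerivAt (fun v => -(A + B * (v + Real.exp 1)) * Real.exp (-v / Real.exp 1))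
        ((A + B * v) * Real.exp (-v / Real.exp 1) / Real.exp 1) v :=
    fun v _ => deriv_aux A B (Real.exp 1) hE v
  have hc : IntervalIntegrable
      (fun v => (A + B * v) * Real.exp (-v / Real.exp 1) / Real.exp 1) volume p (Real.exp 1) := by
    apply Continuous.intervalIntegrable
    continuity
  have := intervalIntegral.integral_eq_sub_of_hasDerivAt hd hc
  have h2 : ∀ v : ℝ, (A + B * v) * (Real.exp (-v / Real.exp 1) / Real.exp 1)
      = (A + B * v) * Real.exp (-v / Real.exp 1) / Real.exp 1 := fun v => by ring
  simp only [h2]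
  rw [this]
  have he : -Real.exp 1 / Real.exp 1 = -1 := by field_simp
  rw [he]
  ring

lemma inter_eq (p : ℝ) (hp0 : 0 ≤ p) : Set.Ico 0 (Real.exp 1) ∩ Set.Ici p = Set.Ico p (Real.exp 1) := by
  ext x
  simp only [Set.mem_inter_iff, Set.mem_Ico, Set.mem_Ici]
  constructor
  · rintro ⟨⟨_, h2⟩, h3⟩; exact ⟨h3, h2⟩
  · rintro ⟨h1, h2⟩; exact ⟨⟨le_trans hp0 h1, h2⟩, h1⟩

lemma intOn {f : ℝ → ℝ} (hm : Measurable f) (C : ℝ)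
    (hC : ∀ v ∈ Set.Ico 0 (Real.exp 1), |f v| ≤ C) :
    IntegrableOn f (Set.Ico 0 (Real.exp 1)) := by
  refine Integrable.mono' (integrable_const C) hm.aestronglyMeasurable ?_
  filter_upwards [ae_restrict_mem measurableSet_Ico] with v hv
  simpa [Real.norm_eq_abs] using hC v hv


/-- for the distribution with density `(1/e)e^{−v/e}` on `[0,e)` and an atom of
mass `1/e` at `e`, and a fixed price `p ∈ [0, e]`: the seller's expected revenue is
`p·e^{−p/e}`, the buyer's expected utility is `e^{1−p/e} − 1`, and the GFT is their sum. -/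
theorem exp_mhr_fixed_price_utilities
    (μ : Measure ℝ)
    (hμ : μ = (volume.restrict (Set.Ico 0 (Real.exp 1))).withDensity
            (fun v => ENNReal.ofReal (Real.exp (-v / Real.exp 1) / Real.exp 1))
          + ENNReal.ofReal (1 / Real.exp 1) • Measure.dirac (Real.exp 1))
    (p : ℝ) (hp : p ∈ Set.Icc (0 : ℝ) (Real.exp 1)) :
    -- seller's expected revenue
    p * (μ (Set.Ici p)).toReal = p * Real.exp (-p / Real.exp 1) ∧
    -- buyer's expected utility
    (∫ v, (if p ≤ v then v - p else 0) ∂μ) = Real.exp (1 - p / Real.exp 1) - 1 ∧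
    -- gains-from-trade
    (∫ v, (if p ≤ v then v else 0) ∂μ)
      = p * Real.exp (-p / Real.exp 1) + Real.exp (1 - p / Real.exp 1) - 1 := by
  obtain ⟨hp0, hpe⟩ := hp
  have hE : Real.exp 1 ≠ 0 := Real.exp_ne_zero 1
  have hE1 : (1:ℝ) < Real.exp 1 := by
    have := Real.exp_one_gt_d9; linarith
  have gcont : Continuous (fun v : ℝ => Real.exp (-v / Real.exp 1) / Real.exp 1) := by
    continuity
  have hone : (1:ℝ) / Real.exp 1 = Real.exp (-1) := by
    rw [Real.exp_neg, one_div]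
  -- seller's measure
  have hseller : μ (Set.Ici p) = ENNReal.ofReal (Real.exp (-p / Real.exp 1)) := by
    rw [hμ, Measure.add_apply, Measure.smul_apply, withDensity_apply _ measurableSet_Ici,
      Measure.restrict_restrict measurableSet_Ici, Set.inter_comm, inter_eq p hp0,
      Measure.dirac_apply_of_mem (show Real.exp 1 ∈ Set.Ici p from hpe)]
    have hi : IntegrableOn (fun v : ℝ => Real.exp (-v / Real.exp 1) / Real.exp 1)
        (Set.Ico p (Real.exp 1)) :=
      (integrableOn_Icc_iff_integrableOn_Ico).mp (gcont.continuousOn.integrableOn_Icc)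
    rw [← ofReal_integral_eq_lintegral_ofReal hi (ae_of_all _ gnonneg)]
    have hval : ∫ v in Set.Ico p (Real.exp 1), Real.exp (-v / Real.exp 1) / Real.exp 1
        = Real.exp (-p / Real.exp 1) - Real.exp (-1) := by
      have := integral_Ico_lin 1 0 p hpe
      simpa using this
    rw [hval, smul_eq_mul, mul_one, hone, ← ENNReal.ofReal_add, sub_add_cancel]
    · have : Real.exp (-1) ≤ Real.exp (-p / Real.exp 1) := by
        apply Real.exp_le_exp.2
        rw [neg_div, neg_le_neg_iff, div_le_one (by linarith)]
        exact hpe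
      linarith
    · exact Real.exp_nonneg _
  have hsellerR : (μ (Set.Ici p)).toReal = Real.exp (-p / Real.exp 1) := by
    rw [hseller, ENNReal.toReal_ofReal (Real.exp_nonneg _)]
  -- shared bound helper
  have gle : ∀ v ∈ Set.Ico 0 (Real.exp 1), |Real.exp (-v / Real.exp 1) / Real.exp 1| ≤ 1 := by
    intro v hv
    rw [abs_of_nonneg (gnonneg v), div_le_one (Real.exp_pos 1)]
    have : Real.exp (-v / Real.exp 1) ≤ 1 := by
      apply Real.exp_le_one_iff.2
      have := hv.1
      apply div_nonpos_of_nonpos_of_nonneg <;> linarith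
    linarith
  have hexp1p : Real.exp (1 - p / Real.exp 1) = Real.exp 1 * Real.exp (-p / Real.exp 1) := by
    rw [show (1:ℝ) - p / Real.exp 1 = 1 + -p / Real.exp 1 by ring, Real.exp_add]
  refine ⟨by rw [hsellerR], ?_, ?_⟩
  · -- buyer
    have hmb : Measurable (fun v : ℝ => if p ≤ v then v - p else 0) :=
      Measurable.ite measurableSet_Ici (measurable_id.sub_const p) measurable_const
    have hint : IntegrableOn (fun v => (if p ≤ v then v - p else 0)
        * (Real.exp (-v / Real.exp 1) / Real.exp 1)) (Set.Ico 0 (Real.exp 1)) := by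
      apply intOn (hmb.mul gmeas) (Real.exp 1)
      intro v hv
      rw [Pi.mul_apply, abs_mul]
      calc |if p ≤ v then v - p else 0| * |Real.exp (-v / Real.exp 1) / Real.exp 1|
          ≤ Real.exp 1 * 1 := by
            apply mul_le_mul _ (gle v hv) (abs_nonneg _) (Real.exp_nonneg 1)
            split
            · rw [abs_of_nonneg (by linarith)]
              have := hv.2; linarith
            · simp [Real.exp_nonneg]
        _ = Real.exp 1 := mul_one _
    rw [hμ, integral_mu _ hmb hint]
    have hind : ∀ v : ℝ, (if p ≤ v then v - p else 0) * (Real.exp (-v / Real.exp 1) / Real.exp 1)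
        = Set.indicator (Set.Ici p)
            (fun v => (-p + 1 * v) * (Real.exp (-v / Real.exp 1) / Real.exp 1)) v := by
      intro v
      rw [Set.indicator_apply]
      simp only [Set.mem_Ici]
      split
      · ring
      · simp
    simp only [hind]
    rw [setIntegral_indicator measurableSet_Ici, inter_eq p hp0,
      integral_Ico_lin (-p) 1 p hpe, if_pos hpe, hexp1p, Real.exp_neg 1]
    field_simp
    ring
  · -- GFT
    have hmb : Measurable (fun v : ℝ => if p ≤ v then v else 0) :=
      Measurable.ite measurableSet_Ici measurable_id measurable_const
    have hint : IntegrableOn (fun v => (if p ≤ v then v else 0)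
        * (Real.exp (-v / Real.exp 1) / Real.exp 1)) (Set.Ico 0 (Real.exp 1)) := by
      apply intOn (hmb.mul gmeas) (Real.exp 1)
      intro v hv
      rw [Pi.mul_apply, abs_mul]
      calc |if p ≤ v then v else 0| * |Real.exp (-v / Real.exp 1) / Real.exp 1|
          ≤ Real.exp 1 * 1 := by
            apply mul_le_mul _ (gle v hv) (abs_nonneg _) (Real.exp_nonneg 1)
            split
            · rw [abs_of_nonneg (by linarith [hv.1])]
              have := hv.2; linarith
            · simp [Real.exp_nonneg]
        _ = Real.exp 1 := mul_one _
    rw [hμ, integral_mu _ hmb hint]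
    have hind : ∀ v : ℝ, (if p ≤ v then v else 0) * (Real.exp (-v / Real.exp 1) / Real.exp 1)
        = Set.indicator (Set.Ici p)
            (fun v => (0 + 1 * v) * (Real.exp (-v / Real.exp 1) / Real.exp 1)) v := by
      intro v
      rw [Set.indicator_apply]
      simp only [Set.mem_Ici]
      split
      · ring
      · simp
    simp only [hind]
    rw [setIntegral_indicator measurableSet_Ici, inter_eq p hp0,
      integral_Ico_lin 0 1 p hpe, if_pos hpe, hexp1p, Real.exp_neg 1]
    field_simp
    ring
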